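/- Let 0 < ε ≤ 1, m = ⌈144·ε^{−2}⌉, and let Ŵ¹, …, Ŵ^m be independent random variables each distributed as W = 2^n·Π_{i=1}^{ℓ} W_i. Then the average Ẑ = (1/m)·Σ_{j=1}^m Ŵ^j satisfies Pr[exp(−ε/2)·Z(θ_ℓ) ≤ Ẑ ≤ exp(ε/2)·Z(θ_ℓ)] ≥ 7/8. -/

import Mathlib

open Finset

/-- A clause over variable set `V`. -/
structure Clause (V : Type) where
  vars : Finset V
  sign : V → Bool

/-- A clause is satisfied by an assignment iff some variable of the clause is
assigned the polarity of its literal. -/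
def Clause.sat {V : Type} (c : Clause V) (X : V → Bool) : Prop :=
  ∃ v ∈ c.vars, X v = c.sign v

instance {V : Type} (c : Clause V) (X : V → Bool) : Decidable (c.sat X) :=
  inferInstanceAs (Decidable (∃ v ∈ c.vars, X v = c.sign v))

/-- `|F(X)|`: the number of clauses not satisfied by the assignment `X`. -/
def numUnsat {V ι : Type} [Fintype ι] (cl : ι → Clause V) (X : V → Bool) : ℕ :=
  (Finset.univ.filter fun i => ¬ (cl i).sat X).card

/-- The weight `w_θ(X) = exp(−θ·|F(X)|)`. -/
noncomputable def wt {V ι : Type} [Fintype ι] (cl : ι → Clause V) (θ : ℝ)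
    (X : V → Bool) : ℝ :=
  Real.exp (-θ * numUnsat cl X)

/-- The partition function `Z(θ) = Σ_{X ∈ {0,1}^V} w_θ(X)`. -/
noncomputable def partZ {V ι : Type} [Fintype V] [DecidableEq V] [Fintype ι]
    (cl : ι → Clause V) (θ : ℝ) : ℝ :=
  ∑ X : V → Bool, wt cl θ X

/-- The value of the random variable `W = 2^n·Π_{i=1}^ℓ W_i` on a joint sample
`x = (X_1, …, X_ℓ)`, where the `i`-th factor is `W_i = w_{θ_i}(X_i)/w_{θ_{i−1}}(X_i)`
(indices shifted so that `x i ∼ μ_{θ_i}` represents the sample for `W_{i+1}`). -/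
noncomputable def What {V ι : Type} [Fintype V] [DecidableEq V] [Fintype ι]
    (cl : ι → Clause V) (θ : ℕ → ℝ) (ℓ : ℕ) (x : Fin ℓ → (V → Bool)) : ℝ :=
  2 ^ Fintype.card V * ∏ i : Fin ℓ, wt cl (θ ((i : ℕ) + 1)) (x i) / wt cl (θ (i : ℕ)) (x i)

/-- The probability of a joint sample `ω` of `m` independent copies of `(X_1, …, X_ℓ)`,
where all coordinates are independent and `ω j i ∼ μ_{θ_i}`. -/
noncomputable def probOmega {V ι : Type} [Fintype V] [DecidableEq V] [Fintype ι]
    (cl : ι → Clause V) (θ : ℕ → ℝ) (ℓ m : ℕ)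
    (ω : Fin m → Fin ℓ → (V → Bool)) : ℝ :=
  ∏ j : Fin m, ∏ i : Fin ℓ, wt cl (θ (i : ℕ)) (ω j i) / partZ cl (θ (i : ℕ))


section AuxIID

private lemma sum_pi_prod' {α : Type} [Fintype α] {m : ℕ} (F : Fin m → α → ℝ) :
    ∑ ω : Fin m → α, ∏ j, F j (ω j) = ∏ j, ∑ x, F j x := by
  rw [Finset.prod_univ_sum, Fintype.piFinset_univ]

private lemma prod_range_ratio' (g : ℕ → ℝ) (hg : ∀ i, g i ≠ 0) (n : ℕ) :
    ∏ i ∈ Finset.range n, g (i + 1) / g i = g n / g 0 := by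
  induction n with
  | zero => simp [div_self (hg 0)]
  | succ n ih =>
    rw [Finset.prod_range_succ, ih, div_mul_div_comm, mul_comm (g 0) (g n),
      mul_div_mul_left _ _ (hg n)]

private lemma iid_total' {α : Type} [Fintype α] {m : ℕ} (Q : α → ℝ) (hQ1 : ∑ x, Q x = 1) :
    ∑ ω : Fin m → α, (∏ j, Q (ω j)) = 1 := by
  rw [sum_pi_prod' (fun _ x => Q x)]
  simp [hQ1]

private lemma iid_single' {α : Type} [Fintype α] {m : ℕ} (Q : α → ℝ) (hQ1 : ∑ x, Q x = 1)
    (W : α → ℝ) (j₀ : Fin m) :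
    ∑ ω : Fin m → α, (∏ j, Q (ω j)) * W (ω j₀) = ∑ x, Q x * W x := by
  have h : ∀ ω : Fin m → α, (∏ j, Q (ω j)) * W (ω j₀)
      = ∏ j, (Q (ω j) * (if j = j₀ then W (ω j) else 1)) := by
    intro ω
    rw [Finset.prod_mul_distrib, Finset.prod_ite_eq' univ j₀ (fun j => W (ω j))]
    simp
  simp_rw [h]
  rw [sum_pi_prod' (fun j x => Q x * (if j = j₀ then W x else 1))]
  have h2 : ∀ j : Fin m, (∑ x, Q x * (if j = j₀ then W x else 1))
      = if j = j₀ then (∑ x, Q x * W x) else 1 := by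
    intro j
    by_cases hj : j = j₀ <;> simp [hj, hQ1]
  simp_rw [h2]
  rw [Finset.prod_ite_eq' univ j₀ (fun _ => ∑ x, Q x * W x)]
  simp

private lemma iid_mixed' {α : Type} [Fintype α] {m : ℕ} (Q : α → ℝ) (hQ1 : ∑ x, Q x = 1)
    (W : α → ℝ) (j₀ k₀ : Fin m) :
    ∑ ω : Fin m → α, (∏ j, Q (ω j)) * (W (ω j₀) * W (ω k₀))
      = if j₀ = k₀ then ∑ x, Q x * W x ^ 2
        else (∑ x, Q x * W x) * (∑ x, Q x * W x) := by
  have h : ∀ ω : Fin m → α, (∏ j, Q (ω j)) * (W (ω j₀) * W (ω k₀))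
      = ∏ j, (Q (ω j) * ((if j = j₀ then W (ω j) else 1) * (if j = k₀ then W (ω j) else 1))) := by
    intro ω
    rw [Finset.prod_mul_distrib, Finset.prod_mul_distrib,
      Finset.prod_ite_eq' univ j₀ (fun j => W (ω j)),
      Finset.prod_ite_eq' univ k₀ (fun j => W (ω j))]
    simp
  simp_rw [h]
  rw [sum_pi_prod' (fun j x => Q x * ((if j = j₀ then W x else 1) * (if j = k₀ then W x else 1)))]
  by_cases hjk : j₀ = k₀
  · subst hjk
    rw [if_pos rfl]
    have h2 : ∀ j : Fin m, (∑ x, Q x * ((if j = j₀ then W x else 1) * (if j = j₀ then W x else 1)))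
        = if j = j₀ then (∑ x, Q x * W x ^ 2) else 1 := by
      intro j
      by_cases hj : j = j₀ <;> simp [hj, hQ1, sq]
    simp_rw [h2]
    rw [Finset.prod_ite_eq' univ j₀ (fun _ => ∑ x, Q x * W x ^ 2)]
    simp
  · rw [if_neg hjk]
    have h2 : ∀ j : Fin m, (∑ x, Q x * ((if j = j₀ then W x else 1) * (if j = k₀ then W x else 1)))
        = (if j = j₀ then (∑ x, Q x * W x) else 1) * (if j = k₀ then (∑ x, Q x * W x) else 1) := by
      intro j
      by_cases hj : j = j₀ <;> by_cases hk : j = k₀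
      · exact absurd (hj ▸ hk) hjk
      · simp [hj, hk, hjk]
      · simp [hj, hk, Ne.symm hjk]
      · simp [hj, hk, hQ1]
    simp_rw [h2]
    rw [Finset.prod_mul_distrib,
      Finset.prod_ite_eq' univ j₀ (fun _ => ∑ x, Q x * W x),
      Finset.prod_ite_eq' univ k₀ (fun _ => ∑ x, Q x * W x)]
    simp

private lemma iid_var' {α : Type} [Fintype α] {m : ℕ} (hm : 0 < m) (Q : α → ℝ)
    (hQ1 : ∑ x, Q x = 1) (W : α → ℝ) :
    ∑ ω : Fin m → α, (∏ j, Q (ω j)) * ((1 / (m : ℝ)) * ∑ j, W (ω j) - ∑ x, Q x * W x) ^ 2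
      = ((∑ x, Q x * W x ^ 2) - (∑ x, Q x * W x) ^ 2) / m := by
  have hm0 : (m : ℝ) ≠ 0 := Nat.cast_ne_zero.2 hm.ne'
  set μ1 := ∑ x, Q x * W x with hμ1
  set μ2 := ∑ x, Q x * W x ^ 2 with hμ2
  have expand : ∀ ω : Fin m → α,
      (∏ j, Q (ω j)) * ((1 / (m : ℝ)) * ∑ j, W (ω j) - μ1) ^ 2
      = (1 / (m : ℝ)) ^ 2 * ((∏ j, Q (ω j)) * ((∑ j, W (ω j)) * (∑ j, W (ω j))))
        - 2 * μ1 * (1 / (m : ℝ)) * ((∏ j, Q (ω j)) * (∑ j, W (ω j)))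
        + μ1 ^ 2 * (∏ j, Q (ω j)) := by
    intro ω; ring
  simp_rw [expand]
  rw [Finset.sum_add_distrib, Finset.sum_sub_distrib, ← Finset.mul_sum, ← Finset.mul_sum,
    ← Finset.mul_sum]
  have e1 : ∑ ω : Fin m → α, (∏ j, Q (ω j)) = 1 := iid_total' Q hQ1
  have e2 : ∑ ω : Fin m → α, (∏ j, Q (ω j)) * (∑ j, W (ω j)) = m * μ1 := by
    simp_rw [Finset.mul_sum]
    rw [Finset.sum_comm]
    have h : ∀ j : Fin m, ∑ ω : Fin m → α, (∏ j', Q (ω j')) * W (ω j) = μ1 :=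
      fun j => iid_single' Q hQ1 W j
    calc ∑ j : Fin m, ∑ ω : Fin m → α, (∏ j', Q (ω j')) * W (ω j)
        = ∑ _j : Fin m, μ1 := Finset.sum_congr rfl (fun j _ => h j)
      _ = m * μ1 := by simp [Finset.card_univ, mul_comm]
  have e3 : ∑ ω : Fin m → α, (∏ j, Q (ω j)) * ((∑ j, W (ω j)) * (∑ j, W (ω j)))
      = m * μ2 + ((m : ℝ) ^ 2 - m) * μ1 ^ 2 := by
    have hs : ∀ ω : Fin m → α, ((∑ j, W (ω j)) * (∑ j, W (ω j)))
        = ∑ j : Fin m, ∑ k : Fin m, W (ω j) * W (ω k) := fun ω => Finset.sum_mul_sum _ _ _ _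
    simp_rw [hs, Finset.mul_sum]
    rw [Finset.sum_comm]
    have h : ∀ j : Fin m, ∑ ω : Fin m → α, ∑ k : Fin m, (∏ j', Q (ω j')) * (W (ω j) * W (ω k))
        = μ2 + ((m : ℝ) - 1) * μ1 ^ 2 := by
      intro j
      rw [Finset.sum_comm]
      have h2 : ∀ k : Fin m, ∑ ω : Fin m → α, (∏ j', Q (ω j')) * (W (ω j) * W (ω k))
          = μ1 ^ 2 + (if j = k then μ2 - μ1 ^ 2 else 0) := by
        intro k
        rw [iid_mixed' Q hQ1 W j k]
        split <;> ring
      calc ∑ k : Fin m, ∑ ω : Fin m → α, (∏ j', Q (ω j')) * (W (ω j) * W (ω k))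
          = ∑ k : Fin m, (μ1 ^ 2 + (if j = k then μ2 - μ1 ^ 2 else 0)) :=
            Finset.sum_congr rfl (fun k _ => h2 k)
        _ = μ2 + ((m : ℝ) - 1) * μ1 ^ 2 := by
            rw [Finset.sum_add_distrib, Finset.sum_ite_eq]
            simp [Finset.card_univ]
            ring
    calc ∑ j : Fin m, ∑ ω : Fin m → α, ∑ k : Fin m, (∏ j', Q (ω j')) * (W (ω j) * W (ω k))
        = ∑ _j : Fin m, (μ2 + ((m : ℝ) - 1) * μ1 ^ 2) := Finset.sum_congr rfl (fun j _ => h j)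
      _ = m * μ2 + ((m : ℝ) ^ 2 - m) * μ1 ^ 2 := by
          simp [Finset.card_univ]
          ring
  rw [e1, e2, e3]
  field_simp
  ring

end AuxIID

section AuxMoments

private lemma wt_pos' {V ι : Type} [Fintype ι] (cl : ι → Clause V) (a : ℝ) (X : V → Bool) :
    0 < wt cl a X := Real.exp_pos _

private lemma partZ_pos' {V ι : Type} [Fintype V] [DecidableEq V] [Fintype ι]
    (cl : ι → Clause V) (a : ℝ) : 0 < partZ cl a :=
  Finset.sum_pos (fun X _ => wt_pos' cl a X) Finset.univ_nonempty

private lemma moment_one' {V ι : Type} [Fintype V] [DecidableEq V] [Fintype ι]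
    (cl : ι → Clause V) (θ : ℕ → ℝ) (ℓ : ℕ) :
    ∑ x : Fin ℓ → (V → Bool),
        (∏ i : Fin ℓ, wt cl (θ (i : ℕ)) (x i) / partZ cl (θ (i : ℕ))) * What cl θ ℓ x
      = 2 ^ Fintype.card V * (partZ cl (θ ℓ) / partZ cl (θ 0)) := by
  have key : ∀ x : Fin ℓ → (V → Bool),
      (∏ i : Fin ℓ, wt cl (θ (i : ℕ)) (x i) / partZ cl (θ (i : ℕ))) * What cl θ ℓ x
      = 2 ^ Fintype.card V *
          ∏ i : Fin ℓ, wt cl (θ ((i : ℕ) + 1)) (x i) / partZ cl (θ (i : ℕ)) := by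
    intro x
    rw [What]
    rw [show (∏ i : Fin ℓ, wt cl (θ (i : ℕ)) (x i) / partZ cl (θ (i : ℕ))) *
        ((2 : ℝ) ^ Fintype.card V *
          ∏ i : Fin ℓ, wt cl (θ ((i : ℕ) + 1)) (x i) / wt cl (θ (i : ℕ)) (x i))
      = 2 ^ Fintype.card V *
        ((∏ i : Fin ℓ, wt cl (θ (i : ℕ)) (x i) / partZ cl (θ (i : ℕ))) *
         (∏ i : Fin ℓ, wt cl (θ ((i : ℕ) + 1)) (x i) / wt cl (θ (i : ℕ)) (x i))) from by ring]
    rw [← Finset.prod_mul_distrib]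
    congr 1
    apply Finset.prod_congr rfl
    intro i _
    have h1 : wt cl (θ (i : ℕ)) (x i) ≠ 0 := (wt_pos' _ _ _).ne'
    have hZ : partZ cl (θ (i : ℕ)) ≠ 0 := (partZ_pos' _ _).ne'
    field_simp
  simp_rw [key]
  rw [← Finset.mul_sum,
    sum_pi_prod' (fun (i : Fin ℓ) (X : V → Bool) =>
      wt cl (θ ((i : ℕ) + 1)) X / partZ cl (θ (i : ℕ)))]
  congr 1
  have hfac : ∀ i : Fin ℓ, (∑ X : V → Bool, wt cl (θ ((i : ℕ) + 1)) X / partZ cl (θ (i : ℕ)))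
      = partZ cl (θ ((i : ℕ) + 1)) / partZ cl (θ (i : ℕ)) := by
    intro i; rw [← Finset.sum_div]; rfl
  simp_rw [hfac]
  rw [Fin.prod_univ_eq_prod_range (fun i => partZ cl (θ (i + 1)) / partZ cl (θ i)) ℓ]
  exact prod_range_ratio' (fun i => partZ cl (θ i)) (fun i => (partZ_pos' cl (θ i)).ne') ℓ

private lemma moment_two' {V ι : Type} [Fintype V] [DecidableEq V] [Fintype ι]
    (cl : ι → Clause V) (θ : ℕ → ℝ) (haff : ∀ i : ℕ, θ (i + 2) = 2 * θ (i + 1) - θ i)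
    (ℓ : ℕ) :
    ∑ x : Fin ℓ → (V → Bool),
        (∏ i : Fin ℓ, wt cl (θ (i : ℕ)) (x i) / partZ cl (θ (i : ℕ))) * (What cl θ ℓ x) ^ 2
      = ((2 : ℝ) ^ Fintype.card V) ^ 2 *
          ((partZ cl (θ (ℓ + 1)) / partZ cl (θ 1)) * (partZ cl (θ ℓ) / partZ cl (θ 0))) := by
  have key : ∀ x : Fin ℓ → (V → Bool),
      (∏ i : Fin ℓ, wt cl (θ (i : ℕ)) (x i) / partZ cl (θ (i : ℕ))) * (What cl θ ℓ x) ^ 2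
      = ((2 : ℝ) ^ Fintype.card V) ^ 2 *
          ∏ i : Fin ℓ, wt cl (θ ((i : ℕ) + 2)) (x i) / partZ cl (θ (i : ℕ)) := by
    intro x
    rw [What, mul_pow]
    rw [show (∏ i : Fin ℓ, wt cl (θ (i : ℕ)) (x i) / partZ cl (θ (i : ℕ))) *
        (((2 : ℝ) ^ Fintype.card V) ^ 2 *
          (∏ i : Fin ℓ, wt cl (θ ((i : ℕ) + 1)) (x i) / wt cl (θ (i : ℕ)) (x i)) ^ 2)
      = ((2 : ℝ) ^ Fintype.card V) ^ 2 *
        ((∏ i : Fin ℓ, wt cl (θ (i : ℕ)) (x i) / partZ cl (θ (i : ℕ))) *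
         (∏ i : Fin ℓ, (wt cl (θ ((i : ℕ) + 1)) (x i) / wt cl (θ (i : ℕ)) (x i)) ^ 2)) from by
        rw [← Finset.prod_pow]; ring]
    rw [← Finset.prod_mul_distrib]
    congr 1
    apply Finset.prod_congr rfl
    intro i _
    have h1 : wt cl (θ (i : ℕ)) (x i) ≠ 0 := (wt_pos' _ _ _).ne'
    have hZ : partZ cl (θ (i : ℕ)) ≠ 0 := (partZ_pos' _ _).ne'
    have h2 : wt cl (θ ((i : ℕ) + 2)) (x i) * wt cl (θ (i : ℕ)) (x i)
        = wt cl (θ ((i : ℕ) + 1)) (x i) ^ 2 := by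
      rw [wt, wt, wt, sq, ← Real.exp_add, ← Real.exp_add]
      congr 1
      rw [haff (i : ℕ)]
      ring
    field_simp
    linear_combination (-1 : ℝ) * h2
  simp_rw [key]
  rw [← Finset.mul_sum,
    sum_pi_prod' (fun (i : Fin ℓ) (X : V → Bool) =>
      wt cl (θ ((i : ℕ) + 2)) X / partZ cl (θ (i : ℕ)))]
  congr 1
  have hfac : ∀ i : Fin ℓ, (∑ X : V → Bool, wt cl (θ ((i : ℕ) + 2)) X / partZ cl (θ (i : ℕ)))
      = partZ cl (θ ((i : ℕ) + 2)) / partZ cl (θ (i : ℕ)) := by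
    intro i; rw [← Finset.sum_div]; rfl
  simp_rw [hfac]
  rw [Fin.prod_univ_eq_prod_range (fun i => partZ cl (θ (i + 2)) / partZ cl (θ i)) ℓ]
  have hZ : ∀ i, partZ cl (θ i) ≠ 0 := fun i => (partZ_pos' cl (θ i)).ne'
  have hsplit : ∀ i ∈ Finset.range ℓ, partZ cl (θ (i + 2)) / partZ cl (θ i)
      = (partZ cl (θ (i + 1 + 1)) / partZ cl (θ (i + 1))) *
        (partZ cl (θ (i + 1)) / partZ cl (θ i)) := by
    intro i _
    rw [div_mul_div_comm, mul_comm (partZ cl (θ (i + 1))) (partZ cl (θ i)),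
      mul_div_mul_right _ _ (hZ (i + 1))]
  rw [Finset.prod_congr rfl hsplit, Finset.prod_mul_distrib,
    prod_range_ratio' (fun i => partZ cl (θ (i + 1))) (fun i => hZ (i + 1)) ℓ,
    prod_range_ratio' (fun i => partZ cl (θ i)) hZ ℓ]

end AuxMoments

set_option maxHeartbeats 4000000 in
open Classical in
/-- Let `0 < ε ≤ 1`, `m = ⌈144·ε⁻²⌉`, and let `Ŵ¹, …, Ŵ^m` be
independent random variables each distributed as `W = 2^n·Π_{i=1}^ℓ W_i`.  Then the
average `Ẑ = (1/m)·Σ_j Ŵ^j` satisfies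
`Pr[exp(−ε/2)·Z(θ_ℓ) ≤ Ẑ ≤ exp(ε/2)·Z(θ_ℓ)] ≥ 7/8`. -/
theorem stmt_13 {V ι : Type} [Fintype V] [DecidableEq V] [Fintype ι]
    (cl : ι → Clause V) (d : ℕ)
    (hdeg : ∀ v : V, (Finset.univ.filter fun i => v ∈ (cl i).vars).card ≤ d)
    (hC : Fintype.card ι ≤ Fintype.card V * d)
    (θ : ℕ → ℝ) (hθ : ∀ i : ℕ, θ i = (i : ℝ) / (d * Fintype.card V))
    (ℓ : ℕ) (ε : ℝ) (hε0 : 0 < ε) (hε1 : ε ≤ 1)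
    (m : ℕ) (hm : m = ⌈(144 : ℝ) / ε ^ 2⌉₊) :
    (7 : ℝ) / 8 ≤
      ∑ ω ∈ Finset.univ.filter (fun ω : Fin m → Fin ℓ → (V → Bool) =>
          Real.exp (-(ε / 2)) * partZ cl (θ ℓ)
              ≤ (1 / (m : ℝ)) * ∑ j : Fin m, What cl θ ℓ (ω j) ∧
            (1 / (m : ℝ)) * ∑ j : Fin m, What cl θ ℓ (ω j)
              ≤ Real.exp (ε / 2) * partZ cl (θ ℓ)),
        probOmega cl θ ℓ m ω := by
  classical
  simp only [probOmega]
  have hZpos : ∀ a : ℝ, 0 < partZ cl a := fun a => partZ_pos' cl a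
  have hθ0 : θ 0 = 0 := by rw [hθ 0]; simp
  have hcard : Fintype.card (V → Bool) = 2 ^ Fintype.card V := by
    rw [Fintype.card_fun, Fintype.card_bool]
  have hZ0 : partZ cl (θ 0) = 2 ^ Fintype.card V := by
    rw [partZ]
    have hwt0 : ∀ X : V → Bool, wt cl (θ 0) X = 1 := by
      intro X; rw [wt, hθ0]; simp
    rw [Finset.sum_congr rfl (fun X _ => hwt0 X), Finset.sum_const, Finset.card_univ, hcard,
      nsmul_eq_mul]
    push_cast
    ring
  have haff : ∀ i : ℕ, θ (i + 2) = 2 * θ (i + 1) - θ i := by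
    intro i; rw [hθ, hθ, hθ]; push_cast; ring
  have hθmono : θ ℓ ≤ θ (ℓ + 1) := by
    rw [hθ, hθ]
    rcases eq_or_lt_of_le (by positivity : (0:ℝ) ≤ (d : ℝ) * (Fintype.card V : ℝ)) with hc | hc
    · rw [← hc]; simp
    · rw [div_le_div_iff₀ hc hc]
      have hl : (ℓ : ℝ) ≤ ((ℓ + 1 : ℕ) : ℝ) := by push_cast; linarith
      nlinarith
  have hZmono : partZ cl (θ (ℓ + 1)) ≤ partZ cl (θ ℓ) := by
    apply Finset.sum_le_sum
    intro X _
    rw [wt, wt]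
    apply Real.exp_le_exp.2
    have hu : (0:ℝ) ≤ (numUnsat cl X : ℝ) := Nat.cast_nonneg _
    nlinarith [hθmono]
  have hZ1 : (2:ℝ) ^ Fintype.card V ≤ Real.exp 1 * partZ cl (θ 1) := by
    have hwt : ∀ X : V → Bool, Real.exp (-1) ≤ wt cl (θ 1) X := by
      intro X
      rw [wt]
      apply Real.exp_le_exp.2
      have hu0 : (0:ℝ) ≤ (numUnsat cl X : ℝ) := Nat.cast_nonneg _
      have hucard : (numUnsat cl X : ℝ) ≤ ((Fintype.card V : ℝ) * d) := by
        have h1 : numUnsat cl X ≤ Fintype.card ι := by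
          rw [numUnsat, ← Finset.card_univ]
          exact Finset.card_filter_le _ _
        have h2 : numUnsat cl X ≤ Fintype.card V * d := h1.trans hC
        exact_mod_cast h2
      rw [hθ 1]
      rcases eq_or_lt_of_le (by positivity : (0:ℝ) ≤ (d : ℝ) * (Fintype.card V : ℝ)) with hc | hc
      · rw [← hc]; simp
      · have hdiv : ((1:ℕ) : ℝ) / ((d:ℝ) * (Fintype.card V : ℝ)) * (numUnsat cl X : ℝ) ≤ 1 := by
          rw [div_mul_eq_mul_div, div_le_one hc]
          push_cast
          nlinarith
        nlinarith [hdiv]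
    have hsum : (2:ℝ) ^ Fintype.card V * Real.exp (-1) ≤ partZ cl (θ 1) := by
      rw [partZ]
      calc (2:ℝ) ^ Fintype.card V * Real.exp (-1)
          = ∑ _X : V → Bool, Real.exp (-1) := by
            rw [Finset.sum_const, Finset.card_univ, hcard, nsmul_eq_mul]
            push_cast
            ring
        _ ≤ ∑ X : V → Bool, wt cl (θ 1) X := Finset.sum_le_sum (fun X _ => hwt X)
    calc (2:ℝ) ^ Fintype.card V
        = Real.exp 1 * ((2:ℝ) ^ Fintype.card V * Real.exp (-1)) := by
          rw [show Real.exp 1 * ((2:ℝ) ^ Fintype.card V * Real.exp (-1))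
              = (Real.exp 1 * Real.exp (-1)) * 2 ^ Fintype.card V from by ring,
            ← Real.exp_add]
          simp
      _ ≤ Real.exp 1 * partZ cl (θ 1) :=
          mul_le_mul_of_nonneg_left hsum (Real.exp_pos 1).le
  -- moments
  have hμ1 : ∑ x : Fin ℓ → (V → Bool),
      (∏ i : Fin ℓ, wt cl (θ (i : ℕ)) (x i) / partZ cl (θ (i : ℕ))) * What cl θ ℓ x
      = partZ cl (θ ℓ) := by
    rw [moment_one' cl θ ℓ, hZ0]
    field_simp
  have hμ2 : ∑ x : Fin ℓ → (V → Bool),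
      (∏ i : Fin ℓ, wt cl (θ (i : ℕ)) (x i) / partZ cl (θ (i : ℕ))) * (What cl θ ℓ x) ^ 2
      = ((2 : ℝ) ^ Fintype.card V) ^ 2 *
          ((partZ cl (θ (ℓ + 1)) / partZ cl (θ 1)) * (partZ cl (θ ℓ) / partZ cl (θ 0))) :=
    moment_two' cl θ haff ℓ
  have hμ2le : ∑ x : Fin ℓ → (V → Bool),
      (∏ i : Fin ℓ, wt cl (θ (i : ℕ)) (x i) / partZ cl (θ (i : ℕ))) * (What cl θ ℓ x) ^ 2
      ≤ Real.exp 1 * partZ cl (θ ℓ) ^ 2 := by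
    rw [hμ2, hZ0]
    have hB : (0:ℝ) < (2:ℝ) ^ Fintype.card V := by positivity
    have hgen : ∀ B P Q R : ℝ, B ≠ 0 → Q ≠ 0 →
        B ^ 2 * ((P / Q) * (R / B)) = B * P * R / Q := by
      intro B P Q R hB hQ
      field_simp
    rw [hgen _ _ _ _ hB.ne' (hZpos (θ 1)).ne', div_le_iff₀ (hZpos (θ 1))]
    have s1 : (2:ℝ) ^ Fintype.card V * partZ cl (θ (ℓ + 1))
        ≤ (Real.exp 1 * partZ cl (θ 1)) * partZ cl (θ ℓ) :=
      mul_le_mul hZ1 hZmono (hZpos _).le (mul_pos (Real.exp_pos 1) (hZpos (θ 1))).le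
    have s2 := mul_le_mul_of_nonneg_right s1 (hZpos (θ ℓ)).le
    calc (2:ℝ) ^ Fintype.card V * partZ cl (θ (ℓ + 1)) * partZ cl (θ ℓ)
        ≤ Real.exp 1 * partZ cl (θ 1) * partZ cl (θ ℓ) * partZ cl (θ ℓ) := s2
      _ = Real.exp 1 * partZ cl (θ ℓ) ^ 2 * partZ cl (θ 1) := by ring
  -- probability space facts
  have hQ1 : ∑ x : Fin ℓ → (V → Bool),
      (∏ i : Fin ℓ, wt cl (θ (i : ℕ)) (x i) / partZ cl (θ (i : ℕ))) = 1 := by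
    rw [sum_pi_prod' (fun (i : Fin ℓ) (X : V → Bool) =>
      wt cl (θ (i : ℕ)) X / partZ cl (θ (i : ℕ)))]
    apply Finset.prod_eq_one
    intro i _
    rw [← Finset.sum_div]
    exact div_self (hZpos (θ (i : ℕ))).ne'
  have hmpos : 0 < m := by
    rw [hm]; exact Nat.ceil_pos.mpr (div_pos (by norm_num) (pow_pos hε0 2))
  have hm0 : (0:ℝ) < (m : ℝ) := by exact_mod_cast hmpos
  have h144 : (144:ℝ) ≤ (m : ℝ) * ε ^ 2 := by
    have h := Nat.le_ceil ((144:ℝ) / ε ^ 2)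
    rw [← hm] at h
    exact (div_le_iff₀ (pow_pos hε0 2)).1 h
  have he3 : Real.exp 1 ≤ 3 := by
    have := Real.exp_one_lt_d9
    linarith
  have hprobnn : ∀ ω : Fin m → Fin ℓ → (V → Bool), 0 ≤ (∏ j : Fin m, ∏ i : Fin ℓ, wt cl (θ (i : ℕ)) (ω j i) / partZ cl (θ (i : ℕ))) := by
    intro ω
    apply Finset.prod_nonneg
    intro j _
    apply Finset.prod_nonneg
    intro i _
    exact div_nonneg (wt_pos' _ _ _).le (hZpos _).le
  have htot : ∑ ω : Fin m → Fin ℓ → (V → Bool), (∏ j : Fin m, ∏ i : Fin ℓ, wt cl (θ (i : ℕ)) (ω j i) / partZ cl (θ (i : ℕ))) = 1 :=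
    iid_total' (fun x : Fin ℓ → (V → Bool) =>
      ∏ i : Fin ℓ, wt cl (θ (i : ℕ)) (x i) / partZ cl (θ (i : ℕ))) hQ1
  have hvar : ∑ ω : Fin m → Fin ℓ → (V → Bool),
      (∏ j : Fin m, ∏ i : Fin ℓ, wt cl (θ (i : ℕ)) (ω j i) / partZ cl (θ (i : ℕ))) *
        ((1 / (m : ℝ)) * (∑ j : Fin m, What cl θ ℓ (ω j))
          - ∑ x : Fin ℓ → (V → Bool),
              (∏ i : Fin ℓ, wt cl (θ (i : ℕ)) (x i) / partZ cl (θ (i : ℕ))) * What cl θ ℓ x) ^ 2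
      = ((∑ x : Fin ℓ → (V → Bool),
            (∏ i : Fin ℓ, wt cl (θ (i : ℕ)) (x i) / partZ cl (θ (i : ℕ))) * What cl θ ℓ x ^ 2)
          - (∑ x : Fin ℓ → (V → Bool),
              (∏ i : Fin ℓ, wt cl (θ (i : ℕ)) (x i) / partZ cl (θ (i : ℕ))) * What cl θ ℓ x) ^ 2)
          / (m : ℝ) :=
    iid_var' hmpos (fun x : Fin ℓ → (V → Bool) =>
      ∏ i : Fin ℓ, wt cl (θ (i : ℕ)) (x i) / partZ cl (θ (i : ℕ))) hQ1 (What cl θ ℓ)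
  rw [hμ1] at hvar
  -- the exponential bound for the deviation
  have hexpL : Real.exp (-(ε / 2)) ≤ 1 - ε / 3 := by
    have h1 : (0:ℝ) < 1 + ε / 2 := by linarith
    have h2 : 1 + ε / 2 ≤ Real.exp (ε / 2) := by
      have := Real.add_one_le_exp (ε / 2); linarith
    have h3 : Real.exp (-(ε / 2)) ≤ (1 + ε / 2)⁻¹ := by
      rw [Real.exp_neg]
      exact inv_anti₀ h1 h2
    refine h3.trans ?_
    rw [inv_eq_one_div, div_le_iff₀ h1]
    nlinarith [mul_nonneg (sub_nonneg.2 hε1) hε0.le]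
  have hexpR : 1 + ε / 2 ≤ Real.exp (ε / 2) := by
    have := Real.add_one_le_exp (ε / 2); linarith
  set Zl := partZ cl (θ ℓ) with hZl
  have hZlpos : 0 < Zl := hZpos (θ ℓ)
  set t := ε / 3 * Zl with ht
  have htpos : 0 < t := mul_pos (by linarith) hZlpos
  -- pointwise Chebyshev
  have cheb_pt : ∀ ω : Fin m → Fin ℓ → (V → Bool),
      ¬ (Real.exp (-(ε / 2)) * Zl ≤ (1 / (m : ℝ)) * ∑ j : Fin m, What cl θ ℓ (ω j) ∧
         (1 / (m : ℝ)) * ∑ j : Fin m, What cl θ ℓ (ω j) ≤ Real.exp (ε / 2) * Zl) →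
      t ^ 2 ≤ ((1 / (m : ℝ)) * (∑ j : Fin m, What cl θ ℓ (ω j)) - Zl) ^ 2 := by
    intro ω hnP
    set A := (1 / (m : ℝ)) * ∑ j : Fin m, What cl θ ℓ (ω j) with hA
    have habs : t ≤ |A - Zl| := by
      rcases not_and_or.1 hnP with h | h
      · push_neg at h
        have hlt : A < (1 - ε / 3) * Zl :=
          h.trans_le (mul_le_mul_of_nonneg_right hexpL hZlpos.le)
        rw [abs_sub_comm]
        refine le_trans ?_ (le_abs_self _)
        nlinarith
      · push_neg at h
        have hgt : (1 + ε / 2) * Zl < A :=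
          lt_of_le_of_lt (mul_le_mul_of_nonneg_right hexpR hZlpos.le) h
        refine le_trans ?_ (le_abs_self _)
        nlinarith
    calc t ^ 2 ≤ |A - Zl| ^ 2 := pow_le_pow_left₀ htpos.le habs 2
      _ = (A - Zl) ^ 2 := sq_abs _
  -- sum over the bad event
  have hbad : ∑ ω ∈ Finset.univ.filter (fun ω : Fin m → Fin ℓ → (V → Bool) =>
      ¬ (Real.exp (-(ε / 2)) * Zl ≤ (1 / (m : ℝ)) * ∑ j : Fin m, What cl θ ℓ (ω j) ∧
         (1 / (m : ℝ)) * ∑ j : Fin m, What cl θ ℓ (ω j) ≤ Real.exp (ε / 2) * Zl)),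
      (∏ j : Fin m, ∏ i : Fin ℓ, wt cl (θ (i : ℕ)) (ω j i) / partZ cl (θ (i : ℕ))) ≤ 1 / 8 := by
    have htsq : (0:ℝ) < t ^ 2 := pow_pos htpos 2
    have step1 : ∑ ω ∈ Finset.univ.filter (fun ω : Fin m → Fin ℓ → (V → Bool) =>
        ¬ (Real.exp (-(ε / 2)) * Zl ≤ (1 / (m : ℝ)) * ∑ j : Fin m, What cl θ ℓ (ω j) ∧
           (1 / (m : ℝ)) * ∑ j : Fin m, What cl θ ℓ (ω j) ≤ Real.exp (ε / 2) * Zl)),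
        (∏ j : Fin m, ∏ i : Fin ℓ, wt cl (θ (i : ℕ)) (ω j i) / partZ cl (θ (i : ℕ)))
        ≤ ∑ ω ∈ Finset.univ.filter (fun ω : Fin m → Fin ℓ → (V → Bool) =>
        ¬ (Real.exp (-(ε / 2)) * Zl ≤ (1 / (m : ℝ)) * ∑ j : Fin m, What cl θ ℓ (ω j) ∧
           (1 / (m : ℝ)) * ∑ j : Fin m, What cl θ ℓ (ω j) ≤ Real.exp (ε / 2) * Zl)),
        (∏ j : Fin m, ∏ i : Fin ℓ, wt cl (θ (i : ℕ)) (ω j i) / partZ cl (θ (i : ℕ))) *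
          (((1 / (m : ℝ)) * (∑ j : Fin m, What cl θ ℓ (ω j)) - Zl) ^ 2 / t ^ 2) := by
      apply Finset.sum_le_sum
      intro ω hω
      rw [Finset.mem_filter] at hω
      have hq := cheb_pt ω hω.2
      exact le_mul_of_one_le_right (hprobnn ω) ((one_le_div htsq).mpr hq)
    have step2 : ∑ ω ∈ Finset.univ.filter (fun ω : Fin m → Fin ℓ → (V → Bool) =>
        ¬ (Real.exp (-(ε / 2)) * Zl ≤ (1 / (m : ℝ)) * ∑ j : Fin m, What cl θ ℓ (ω j) ∧
           (1 / (m : ℝ)) * ∑ j : Fin m, What cl θ ℓ (ω j) ≤ Real.exp (ε / 2) * Zl)),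
        (∏ j : Fin m, ∏ i : Fin ℓ, wt cl (θ (i : ℕ)) (ω j i) / partZ cl (θ (i : ℕ))) *
          (((1 / (m : ℝ)) * (∑ j : Fin m, What cl θ ℓ (ω j)) - Zl) ^ 2 / t ^ 2)
        ≤ ∑ ω : Fin m → Fin ℓ → (V → Bool),
        (∏ j : Fin m, ∏ i : Fin ℓ, wt cl (θ (i : ℕ)) (ω j i) / partZ cl (θ (i : ℕ))) *
          (((1 / (m : ℝ)) * (∑ j : Fin m, What cl θ ℓ (ω j)) - Zl) ^ 2 / t ^ 2) := by
      apply Finset.sum_le_sum_of_subset_of_nonneg (Finset.filter_subset _ _)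
      intro ω _ _
      exact mul_nonneg (hprobnn ω) (div_nonneg (sq_nonneg _) (sq_nonneg _))
    have step3 : ∑ ω : Fin m → Fin ℓ → (V → Bool),
        (∏ j : Fin m, ∏ i : Fin ℓ, wt cl (θ (i : ℕ)) (ω j i) / partZ cl (θ (i : ℕ))) *
          (((1 / (m : ℝ)) * (∑ j : Fin m, What cl θ ℓ (ω j)) - Zl) ^ 2 / t ^ 2)
        = ((∑ x : Fin ℓ → (V → Bool),
            (∏ i : Fin ℓ, wt cl (θ (i : ℕ)) (x i) / partZ cl (θ (i : ℕ))) * What cl θ ℓ x ^ 2)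
          - Zl ^ 2) / (m : ℝ) / t ^ 2 := by
      rw [← hvar, Finset.sum_div]
      apply Finset.sum_congr rfl
      intro ω _
      exact (mul_div_assoc _ _ _).symm
    have step4 : ((∑ x : Fin ℓ → (V → Bool),
            (∏ i : Fin ℓ, wt cl (θ (i : ℕ)) (x i) / partZ cl (θ (i : ℕ))) * What cl θ ℓ x ^ 2)
          - Zl ^ 2) / (m : ℝ) / t ^ 2 ≤ 1 / 8 := by
      rw [div_div, div_le_iff₀ (mul_pos hm0 (pow_pos htpos 2)), ht]
      nlinarith [hμ2le, mul_nonneg (sub_nonneg.2 h144) (sq_nonneg Zl),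
        mul_nonneg (sub_nonneg.2 he3) (sq_nonneg Zl)]
    exact le_trans (le_trans step1 step2) (le_trans (le_of_eq step3) step4)
  have hsplit := Finset.sum_filter_add_sum_filter_not
    (Finset.univ : Finset (Fin m → Fin ℓ → (V → Bool)))
    (fun ω : Fin m → Fin ℓ → (V → Bool) =>
      Real.exp (-(ε / 2)) * Zl ≤ (1 / (m : ℝ)) * ∑ j : Fin m, What cl θ ℓ (ω j) ∧
      (1 / (m : ℝ)) * ∑ j : Fin m, What cl θ ℓ (ω j) ≤ Real.exp (ε / 2) * Zl)
    (fun ω : Fin m → Fin ℓ → (V → Bool) => ∏ j : Fin m, ∏ i : Fin ℓ, wt cl (θ (i : ℕ)) (ω j i) / partZ cl (θ (i : ℕ)))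
  rw [htot] at hsplit
  linarith [hbad, hsplit]
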